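/- Let p > 1 and α₁, α₂ > 0. The measure on (1/(√p+1)², 1/(√p−1)²) with density √((x − 1/(√p+1)²)(1/(√p−1)² − x))/(2πx²) · (α₁ + α₂/x) is a probability measure if and only if α₁ + α₂·p = p − 1. -/

import Mathlib

open MeasureTheory Set

/-- The measure on `(1/(√p+1)², 1/(√p-1)²)` with density
`√((x - 1/(√p+1)²)(1/(√p-1)² - x))/(2πx²) · (α₁ + α₂/x)`. -/
noncomputable def invFpMixture (p α₁ α₂ : ℝ) : Measure ℝ :=
  MeasureTheory.volume.withDensity
    (fun x => ENNReal.ofReal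
      ((Set.Ioo (((Real.sqrt p + 1) ^ 2)⁻¹) (((Real.sqrt p - 1) ^ 2)⁻¹)).indicator
        (fun x =>
          Real.sqrt ((x - ((Real.sqrt p + 1) ^ 2)⁻¹) * (((Real.sqrt p - 1) ^ 2)⁻¹ - x)) /
              (2 * Real.pi * x ^ 2) * (α₁ + α₂ / x)) x))


set_option maxHeartbeats 1600000 in
open Real in
lemma key_hasDeriv (a b s α₁ α₂ : ℝ) (ha : 0 < a) (hab : a < b) (hs : 0 < s)
    (hs2 : s ^ 2 = a * b) (x : ℝ) (hx : x ∈ Set.Ioo a b) :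
    HasDerivAt (fun y => -α₁ * arcsin ((2*y - a - b)/(b - a))
      + (α₁*(a+b)/(2*s) + α₂*((a+b)^2/(8*s^3) - 1/(2*s))) * arcsin (((a+b) - 2*a*b/y)/(b - a))
      + (-α₁ + α₂*(a+b)/(4*(a*b))) * (Real.sqrt ((y-a)*(b-y))/y)
      - α₂/2 * (Real.sqrt ((y-a)*(b-y))/y^2))
      (Real.sqrt ((x-a)*(b-x)) / x^2 * (α₁ + α₂/x)) x := by
  obtain ⟨hax, hxb⟩ := hx
  have hx0 : 0 < x := ha.trans hax
  have hba : 0 < b - a := by linarith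
  have hR : 0 < (x - a) * (b - x) := mul_pos (by linarith) (by linarith)
  set t := Real.sqrt ((x - a) * (b - x)) with htdef
  have ht0 : 0 < t := Real.sqrt_pos.2 hR
  have ht : t ^ 2 = (x - a) * (b - x) := Real.sq_sqrt hR.le
  -- derivative of inner polynomial
  have hr : HasDerivAt (fun y : ℝ => (y - a) * (b - y)) (a + b - 2*x) x := by
    have := ((hasDerivAt_id x).sub_const a).mul ((hasDerivAt_const x b).sub (hasDerivAt_id x))
    refine this.congr_deriv (Eq.symm ?_)
    simp only [id_eq, Pi.sub_apply]; ring
  have hS : HasDerivAt (fun y => Real.sqrt ((y - a) * (b - y))) ((a + b - 2*x) / (2*t)) x := by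
    have := (Real.hasDerivAt_sqrt hR.ne').comp x hr
    refine this.congr_deriv (Eq.symm ?_)
    field_simp
    rw [← htdef]
  -- arcsin 1
  have hu1 : HasDerivAt (fun y : ℝ => (2*y - a - b)/(b - a)) (2/(b - a)) x := by
    have : HasDerivAt (fun y : ℝ => 2*y - a - b) 2 x := by
      simpa using (((hasDerivAt_id x).const_mul 2).sub_const a).sub_const b
    exact this.div_const _
  have hb1 : -1 < (2*x - a - b)/(b - a) := by
    rw [lt_div_iff₀ hba]; linarith
  have hb1' : (2*x - a - b)/(b - a) < 1 := by
    rw [div_lt_one hba]; linarith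
  have hsq1 : Real.sqrt (1 - ((2*x - a - b)/(b - a))^2) = 2*t/(b - a) := by
    have h : 1 - ((2*x - a - b)/(b - a))^2 = (2*t/(b - a))^2 := by
      rw [div_pow, div_pow, mul_pow, ht]
      field_simp
      ring
    rw [h, Real.sqrt_sq (by positivity)]
  have hA1 : HasDerivAt (fun y => arcsin ((2*y - a - b)/(b - a))) (1/t) x := by
    have := (Real.hasDerivAt_arcsin hb1.ne' hb1'.ne).comp x hu1
    refine this.congr_deriv (Eq.symm ?_)
    rw [hsq1]
    field_simp
  -- arcsin 2
  have hu2 : HasDerivAt (fun y : ℝ => ((a+b) - 2*a*b/y)/(b - a)) ((2*a*b/x^2)/(b - a)) x := by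
    have h1 : HasDerivAt (fun y : ℝ => 2*a*b/y) (-(2*a*b)/x^2) x := by
      simp only [div_eq_mul_inv]
      have := (hasDerivAt_inv hx0.ne').const_mul (2*a*b)
      refine this.congr_deriv (Eq.symm ?_)
      field_simp
    have := ((hasDerivAt_const x (a+b)).sub h1).div_const (b - a)
    refine this.congr_deriv (Eq.symm ?_)
    field_simp
    ring
  have hb2 : -1 < ((a+b) - 2*a*b/x)/(b - a) := by
    rw [lt_div_iff₀ hba]
    have : 2*a*b/x < 2*b := by rw [div_lt_iff₀ hx0]; nlinarith
    linarith
  have hb2' : ((a+b) - 2*a*b/x)/(b - a) < 1 := by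
    rw [div_lt_one hba]
    have : 2*a < 2*a*b/x := by rw [lt_div_iff₀ hx0]; nlinarith
    linarith
  have hsq2 : Real.sqrt (1 - (((a+b) - 2*a*b/x)/(b - a))^2) = 2*s*t/((b - a)*x) := by
    have h : 1 - (((a+b) - 2*a*b/x)/(b - a))^2 = (2*s*t/((b - a)*x))^2 := by
      have hrhs : (2*s*t/((b - a)*x))^2 = 4*(a*b)*((x-a)*(b-x))/((b-a)^2*x^2) := by
        rw [div_pow]
        congr 1
        · rw [mul_pow, mul_pow, hs2, ht]; ring
        · rw [mul_pow]
      rw [hrhs]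
      field_simp
      ring
    rw [h, Real.sqrt_sq (by positivity)]
  have hA2 : HasDerivAt (fun y => arcsin (((a+b) - 2*a*b/y)/(b - a))) (s/(t*x)) x := by
    have := (Real.hasDerivAt_arcsin hb2.ne' hb2'.ne).comp x hu2
    refine this.congr_deriv (Eq.symm ?_)
    rw [hsq2, show 2*a*b = 2*s^2 by rw [hs2]; ring]
    field_simp
  have hD1 : HasDerivAt (fun y => Real.sqrt ((y-a)*(b-y))/y)
      (((a+b-2*x)*x - 2*((x-a)*(b-x)))/(2*t*x^2)) x := by
    have := hS.div (hasDerivAt_id x) hx0.ne'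
    refine this.congr_deriv (Eq.symm ?_)
    rw [← htdef]
    rw [← ht]
    simp only [id_eq]
    field_simp
  have hD2 : HasDerivAt (fun y => Real.sqrt ((y-a)*(b-y))/y^2)
      (((a+b-2*x)*x - 4*((x-a)*(b-x)))/(2*t*x^3)) x := by
    have := hS.div (hasDerivAt_pow 2 x) (pow_ne_zero 2 hx0.ne')
    refine this.congr_deriv (Eq.symm ?_)
    rw [← htdef]
    rw [← ht]
    push_cast
    field_simp
    ring
  have hcomb := (((hA1.const_mul (-α₁)).add
      (hA2.const_mul (α₁*(a+b)/(2*s) + α₂*((a+b)^2/(8*s^3) - 1/(2*s))))).add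
      (hD1.const_mul (-α₁ + α₂*(a+b)/(4*(a*b))))).sub (hD2.const_mul (α₂/2))
  refine hcomb.congr_deriv (Eq.symm ?_)
  rw [show (α₁*(a+b)/(2*s) + α₂*((a+b)^2/(8*s^3) - 1/(2*s))) * (s/(t*x))
      = (α₁*(a+b)/2 + α₂*((a+b)^2/(8*(a*b)) - 1/2))/(t*x) by
    rw [← hs2]; field_simp]
  rw [show t / x^2 * (α₁ + α₂/x) = ((x-a)*(b-x))*(α₁ + α₂/x)/(t*x^2) by
    rw [← ht]; field_simp]
  have hb : 0 < b := ha.trans hab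
  have hab0 : a * b ≠ 0 := (mul_pos ha hb).ne'
  field_simp
  ring

set_option maxHeartbeats 1600000 in
open Real in
lemma key_integral (a b s α₁ α₂ : ℝ) (ha : 0 < a) (hab : a < b) (hs : 0 < s)
    (hs2 : s ^ 2 = a * b) :
    ∫ x in a..b, Real.sqrt ((x - a) * (b - x)) / (2 * Real.pi * x ^ 2) * (α₁ + α₂ / x)
    = (α₁ * ((a+b)/(2*s) - 1) + α₂ * ((a+b)^2/(8*s^3) - 1/(2*s))) / 2 := by
  have hb : 0 < b := ha.trans hab
  have hba : 0 < b - a := by linarith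
  have h0 : ∀ y ∈ Icc a b, y ≠ 0 := fun y hy => (lt_of_lt_of_le ha hy.1).ne'
  set H : ℝ → ℝ := fun y => -α₁ * arcsin ((2*y - a - b)/(b - a))
      + (α₁*(a+b)/(2*s) + α₂*((a+b)^2/(8*s^3) - 1/(2*s))) * arcsin (((a+b) - 2*a*b/y)/(b - a))
      + (-α₁ + α₂*(a+b)/(4*(a*b))) * (Real.sqrt ((y-a)*(b-y))/y)
      - α₂/2 * (Real.sqrt ((y-a)*(b-y))/y^2) with hHdef
  have hFTC := intervalIntegral.integral_eq_sub_of_hasDeriv_right_of_le hab.le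
    (f := fun y => H y / (2 * Real.pi))
    (f' := fun x => Real.sqrt ((x - a) * (b - x)) / (2 * Real.pi * x ^ 2) * (α₁ + α₂ / x))
    ?_ ?_ ?_
  · rw [hFTC, hHdef]
    simp only
    rw [show (2*b - a - b)/(b - a) = 1 by rw [show 2*b - a - b = b - a by ring, div_self hba.ne']]
    rw [show ((a+b) - 2*a*b/b)/(b - a) = 1 by
      rw [show (a+b) - 2*a*b/b = b - a by field_simp; ring, div_self hba.ne']]
    rw [show (2*a - a - b)/(b - a) = -1 by
      rw [show 2*a - a - b = -(b - a) by ring, neg_div, div_self hba.ne']]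
    rw [show ((a+b) - 2*a*b/a)/(b - a) = -1 by
      rw [show (a+b) - 2*a*b/a = -(b - a) by field_simp; ring, neg_div, div_self hba.ne']]
    rw [Real.arcsin_one, Real.arcsin_neg_one]
    rw [show (b - a) * (b - b) = 0 by ring, show (a - a) * (b - a) = 0 by ring, Real.sqrt_zero]
    field_simp
    ring
  · -- continuity of H on Icc a b
    apply ContinuousOn.div_const
    apply ContinuousOn.sub
    apply ContinuousOn.add
    apply ContinuousOn.add
    · exact (continuous_const.mul (Real.continuous_arcsin.comp (by continuity))).continuousOn
    · apply ContinuousOn.mul continuousOn_const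
      apply Real.continuous_arcsin.comp_continuousOn
      exact (continuousOn_const.sub (continuousOn_const.div continuousOn_id h0)).div_const _
    · apply ContinuousOn.mul continuousOn_const
      exact (Real.continuous_sqrt.comp (by continuity)).continuousOn.div continuousOn_id h0
    · apply ContinuousOn.mul continuousOn_const
      exact (Real.continuous_sqrt.comp (by continuity)).continuousOn.div
        (continuous_pow 2).continuousOn (fun y hy => pow_ne_zero 2 (h0 y hy))
  · intro x hx
    have h1 : HasDerivAt (fun y => H y / (2 * Real.pi))
        (Real.sqrt ((x - a) * (b - x)) / (2 * Real.pi * x ^ 2) * (α₁ + α₂ / x)) x := by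
      have h2 := (key_hasDeriv a b s α₁ α₂ ha hab hs hs2 x hx).div_const (2 * Real.pi)
      simp only [hHdef]
      obtain ⟨hax, hxb⟩ := hx
      have hx0 : (0:ℝ) < x := ha.trans hax
      refine h2.congr_deriv (Eq.symm ?_)
      field_simp
    exact h1.hasDerivWithinAt
  · apply ContinuousOn.intervalIntegrable
    rw [uIcc_of_le hab.le]
    apply ContinuousOn.mul
    · apply ContinuousOn.div (Real.continuous_sqrt.comp (by continuity)).continuousOn
        (continuous_const.mul (continuous_pow 2)).continuousOn
      intro y hy
      have := h0 y hy
      exact mul_ne_zero (mul_ne_zero two_ne_zero Real.pi_ne_zero) (pow_ne_zero 2 this)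
    · exact continuousOn_const.add (continuousOn_const.div continuousOn_id h0)

open Real in
lemma mass_eq (a b s α₁ α₂ : ℝ) (ha : 0 < a) (hab : a < b) (hs : 0 < s)
    (hs2 : s ^ 2 = a * b) (hα₁ : 0 ≤ α₁) (hα₂ : 0 ≤ α₂) :
    MeasureTheory.volume.withDensity
      (fun x => ENNReal.ofReal
        ((Set.Ioo a b).indicator
          (fun x => Real.sqrt ((x - a) * (b - x)) / (2 * Real.pi * x ^ 2) * (α₁ + α₂ / x)) x))
      Set.univ
    = ENNReal.ofReal
        ((α₁ * ((a+b)/(2*s) - 1) + α₂ * ((a+b)^2/(8*s^3) - 1/(2*s))) / 2) := by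
  have h0 : ∀ y ∈ Icc a b, y ≠ 0 := fun y hy => (lt_of_lt_of_le ha hy.1).ne'
  set f : ℝ → ℝ :=
    fun x => Real.sqrt ((x - a) * (b - x)) / (2 * Real.pi * x ^ 2) * (α₁ + α₂ / x) with hfdef
  have hcont : ContinuousOn f (Icc a b) := by
    apply ContinuousOn.mul
    · apply ContinuousOn.div (Real.continuous_sqrt.comp (by continuity)).continuousOn
        (continuous_const.mul (continuous_pow 2)).continuousOn
      intro y hy
      have := h0 y hy
      exact mul_ne_zero (mul_ne_zero two_ne_zero Real.pi_ne_zero) (pow_ne_zero 2 this)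
    · exact continuousOn_const.add (continuousOn_const.div continuousOn_id h0)
  have hInt : Integrable ((Set.Ioo a b).indicator f) := by
    rw [integrable_indicator_iff measurableSet_Ioo]
    exact hcont.integrableOn_Icc.mono_set Ioo_subset_Icc_self
  have hnn : 0 ≤ᵐ[volume] (Set.Ioo a b).indicator f := by
    apply Filter.Eventually.of_forall
    intro x
    apply Set.indicator_nonneg
    intro y hy
    have hy0 : 0 < y := ha.trans hy.1
    rw [hfdef]
    exact mul_nonneg (div_nonneg (Real.sqrt_nonneg _) (by positivity))
      (add_nonneg hα₁ (div_nonneg hα₂ hy0.le))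
  rw [withDensity_apply _ MeasurableSet.univ, Measure.restrict_univ,
    ← MeasureTheory.ofReal_integral_eq_lintegral_ofReal hInt hnn]
  congr 1
  rw [MeasureTheory.integral_indicator measurableSet_Ioo,
    ← MeasureTheory.integral_Ioc_eq_integral_Ioo,
    ← intervalIntegral.integral_of_le hab.le]
  exact key_integral a b s α₁ α₂ ha hab hs hs2

/-- For `p > 1` and `α₁, α₂ > 0`, the above measure is a probability measure
if and only if `α₁ + α₂·p = p - 1`. -/
theorem invFpMixture_isProbability_iff (p α₁ α₂ : ℝ) (hp : 1 < p)
    (hα₁ : 0 < α₁) (hα₂ : 0 < α₂) :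
    IsProbabilityMeasure (invFpMixture p α₁ α₂) ↔ α₁ + α₂ * p = p - 1 := by
  have hsp1 : 1 < Real.sqrt p := by
    rw [show (1:ℝ) = Real.sqrt 1 by rw [Real.sqrt_one]]
    exact Real.sqrt_lt_sqrt (by norm_num) hp
  set sp := Real.sqrt p with hspdef
  have hsp2 : sp ^ 2 = p := Real.sq_sqrt (by linarith)
  have ha : 0 < ((sp + 1) ^ 2)⁻¹ := by positivity
  have hq : 0 < (sp - 1) ^ 2 := by
    have : sp - 1 ≠ 0 := by intro h; nlinarith
    positivity
  have hab : ((sp + 1) ^ 2)⁻¹ < ((sp - 1) ^ 2)⁻¹ := by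
    apply inv_strictAnti₀ hq
    nlinarith
  have hs : 0 < (p - 1)⁻¹ := inv_pos.2 (by linarith)
  have hs2 : ((p - 1)⁻¹) ^ 2 = ((sp + 1) ^ 2)⁻¹ * ((sp - 1) ^ 2)⁻¹ := by
    rw [← mul_inv, ← mul_pow, ← inv_pow]
    congr 2
    nlinarith
  have hmass := mass_eq (((sp + 1) ^ 2)⁻¹) (((sp - 1) ^ 2)⁻¹) ((p - 1)⁻¹) α₁ α₂
    ha hab hs hs2 hα₁.le hα₂.le
  have hval : (α₁ * (((((sp + 1) ^ 2)⁻¹ + ((sp - 1) ^ 2)⁻¹))/(2*(p - 1)⁻¹) - 1)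
      + α₂ * (((((sp + 1) ^ 2)⁻¹ + ((sp - 1) ^ 2)⁻¹))^2/(8*((p - 1)⁻¹)^3) - 1/(2*(p - 1)⁻¹))) / 2
      = (α₁ + α₂ * p)/(p - 1) := by
    rw [← hsp2]
    have h1 : sp + 1 ≠ 0 := by positivity
    have h2 : sp - 1 ≠ 0 := by intro h; nlinarith
    have h3 : sp ^ 2 - 1 ≠ 0 := by intro h; nlinarith
    field_simp
    ring
  rw [show invFpMixture p α₁ α₂ = MeasureTheory.volume.withDensity
      (fun x => ENNReal.ofReal
        ((Set.Ioo (((sp + 1) ^ 2)⁻¹) (((sp - 1) ^ 2)⁻¹)).indicator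
          (fun x =>
            Real.sqrt ((x - ((sp + 1) ^ 2)⁻¹) * (((sp - 1) ^ 2)⁻¹ - x)) /
                (2 * Real.pi * x ^ 2) * (α₁ + α₂ / x)) x)) from rfl]
  rw [MeasureTheory.isProbabilityMeasure_iff, hmass, hval, ENNReal.ofReal_eq_one]
  rw [div_eq_one_iff_eq (by intro h; rw [sub_eq_zero] at h; exact (hp.ne h.symm) : p - 1 ≠ 0)]
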